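/- Jordan's theorem: for every n there exists a constant J(n) such that every finite subgroup of GL(n, ℂ) contains a normal abelian subgroup of index at most J(n); in particular GL(n, ℂ) is a Jordan group. -/

import Mathlib

open scoped Matrix.Norms.L2Operator ComplexOrder
open Matrix


/-- A group `G` is Jordan with constant `J` if every finite subgroup of `G`
contains a normal abelian subgroup of index at most `J`. -/
def IsJordanWith (J : ℕ) (G : Type*) [Group G] : Prop :=
  ∀ H : Subgroup G, Finite H →
    ∃ A : Subgroup H, A.Normal ∧ (∀ a b : A, a * b = b * a) ∧ A.index ≤ J

/-- A group is Jordan if it is Jordan with some positive constant. -/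
def IsJordanGroup (G : Type*) [Group G] : Prop := ∃ J : ℕ, 0 < J ∧ IsJordanWith J G

set_option maxHeartbeats 1000000

namespace JordanAux

abbrev Mat (n : ℕ) := Matrix (Fin n) (Fin n) ℂ

variable {n : ℕ}

/-- The matrix underlying an element of a subgroup of `GL (Fin n) ℂ`. -/
def mval {K : Subgroup (GL (Fin n) ℂ)} (x : K) : Mat n := ((x : GL (Fin n) ℂ) : Mat n)

@[simp] lemma mval_mul {K : Subgroup (GL (Fin n) ℂ)} (x y : K) :
    mval (x * y) = mval x * mval y := rfl

@[simp] lemma mval_one {K : Subgroup (GL (Fin n) ℂ)} : mval (1 : K) = 1 := rfl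

lemma mval_inv_mul {K : Subgroup (GL (Fin n) ℂ)} (x : K) : mval x⁻¹ * mval x = 1 := by
  rw [← mval_mul, inv_mul_cancel, mval_one]

lemma mval_mul_inv {K : Subgroup (GL (Fin n) ℂ)} (x : K) : mval x * mval x⁻¹ = 1 := by
  rw [← mval_mul, mul_inv_cancel, mval_one]

@[simp] lemma mval_pow {K : Subgroup (GL (Fin n) ℂ)} (x : K) (k : ℕ) :
    mval (x ^ k) = (mval x) ^ k := by
  induction k with
  | zero => simp
  | succ k ih => rw [pow_succ, pow_succ, mval_mul, ih]

lemma mval_injective {K : Subgroup (GL (Fin n) ℂ)} : Function.Injective (mval (K := K)) := by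
  intro x y h
  exact Subtype.ext (Units.ext h)

/-- Conjugation by a unitary element preserves the distance to `1`. -/
lemma norm_conj {K : Subgroup (GL (Fin n) ℂ)} (hK : ∀ x : K, mval x ∈ unitary (Mat n))
    (g x : K) : ‖mval (g * x * g⁻¹) - 1‖ = ‖mval x - 1‖ := by
  have h1 : mval (g * x * g⁻¹) - 1 = mval g * (mval x - 1) * mval g⁻¹ := by
    have h2 : mval g * (mval x - 1) * mval g⁻¹ = mval (g * x * g⁻¹) - 1 := by
      rw [mul_sub, mul_one, sub_mul, mval_mul_inv g, ← mval_mul, ← mval_mul]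
    exact h2.symm
  rw [h1, CStarRing.norm_mul_mem_unitary _ (hK g⁻¹), CStarRing.norm_mem_unitary_mul _ (hK g)]

/-- The key commutator estimate. -/
lemma comm_norm {K : Subgroup (GL (Fin n) ℂ)} (hK : ∀ x : K, mval x ∈ unitary (Mat n))
    (a b : K) :
    ‖mval (a * b * a⁻¹ * b⁻¹) - 1‖ ≤ 2 * ‖mval a - 1‖ * ‖mval b - 1‖ := by
  have h1 : (mval (a * b * a⁻¹ * b⁻¹) - 1) * mval (b * a) = mval a * mval b - mval b * mval a := by
    have h2 : (a * b * a⁻¹ * b⁻¹) * (b * a) = a * b := by group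
    rw [sub_mul, one_mul, ← mval_mul, h2, mval_mul, mval_mul]
  have h3 : ‖mval (a * b * a⁻¹ * b⁻¹) - 1‖
      = ‖(mval (a * b * a⁻¹ * b⁻¹) - 1) * mval (b * a)‖ := by
    rw [CStarRing.norm_mul_mem_unitary _ (hK (b * a))]
  have h4 : mval a * mval b - mval b * mval a
      = (mval a - 1) * (mval b - 1) - (mval b - 1) * (mval a - 1) := by noncomm_ring
  rw [h3, h1, h4]
  calc ‖(mval a - 1) * (mval b - 1) - (mval b - 1) * (mval a - 1)‖
      ≤ ‖(mval a - 1) * (mval b - 1)‖ + ‖(mval b - 1) * (mval a - 1)‖ := norm_sub_le _ _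
    _ ≤ ‖mval a - 1‖ * ‖mval b - 1‖ + ‖mval b - 1‖ * ‖mval a - 1‖ := by
        gcongr <;> exact norm_mul_le _ _
    _ = 2 * ‖mval a - 1‖ * ‖mval b - 1‖ := by ring

section Eigen

variable (hn : 0 < n)

local notation "φ" => fun (X : Mat n) => (toEuclideanCLM (𝕜 := ℂ) (n := Fin n) X)

lemma phi_mul_apply (X Y : Mat n) (v : EuclideanSpace ℂ (Fin n)) :
    toEuclideanCLM (𝕜 := ℂ) (X * Y) v = toEuclideanCLM (𝕜 := ℂ) X (toEuclideanCLM (𝕜 := ℂ) Y v) := by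
  rw [_root_.map_mul, ContinuousLinearMap.mul_apply]

lemma phi_one_apply (v : EuclideanSpace ℂ (Fin n)) :
    toEuclideanCLM (𝕜 := ℂ) (1 : Mat n) v = v := by
  rw [_root_.map_one, ContinuousLinearMap.one_apply]

lemma phi_pow_apply (X : Mat n) (z : ℂ) (v : EuclideanSpace ℂ (Fin n))
    (h : toEuclideanCLM (𝕜 := ℂ) X v = z • v) (k : ℕ) :
    toEuclideanCLM (𝕜 := ℂ) (X ^ k) v = z ^ k • v := by
  induction k with
  | zero => simpa using phi_one_apply v
  | succ k ih =>
      rw [pow_succ', phi_mul_apply, ih, _root_.map_smul, h, smul_smul, ← pow_succ]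

/-- The norm of `Z - 1` is at least `‖z - 1‖` for an eigenvalue `z` of `Z`. -/
lemma eigen_norm_le (Z : Mat n) (v : EuclideanSpace ℂ (Fin n)) (hv : v ≠ 0) (z : ℂ)
    (h : toEuclideanCLM (𝕜 := ℂ) Z v = z • v) : ‖z - 1‖ ≤ ‖Z - 1‖ := by
  have h1 : toEuclideanCLM (𝕜 := ℂ) (Z - 1) v = (z - 1) • v := by
    rw [map_sub, ContinuousLinearMap.sub_apply, h, phi_one_apply, sub_smul, one_smul]
  have h2 : ‖(z - 1) • v‖ ≤ ‖Z - 1‖ * ‖v‖ := by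
    rw [← h1, Matrix.l2_opNorm_def]
    exact (toEuclideanCLM (𝕜 := ℂ) (Z - 1)).le_opNorm v
  rw [norm_smul] at h2
  have hv' : 0 < ‖v‖ := norm_pos_iff.mpr hv
  exact le_of_mul_le_mul_right h2 hv'

/-- Common eigenvector extraction: if `A` commutes with `C`, `C^M = 1`, `C ≠ 1` then there is a
common eigenvector whose `C`-eigenvalue is a nontrivial `M`-th root of unity. -/
lemma exists_common_eigvec (A C : Mat n) (hcomm : A * C = C * A)
    (M : ℕ) (hM : 0 < M) (hCM : C ^ M = 1) (hC : C ≠ 1) :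
    ∃ (v : EuclideanSpace ℂ (Fin n)) (μ lam : ℂ), v ≠ 0 ∧ lam ≠ 1 ∧ lam ^ M = 1 ∧
      toEuclideanCLM (𝕜 := ℂ) A v = μ • v ∧ toEuclideanCLM (𝕜 := ℂ) C v = lam • v := by
  classical
  set V := EuclideanSpace ℂ (Fin n)
  let ψ : Mat n → Module.End ℂ V := fun X => ((toEuclideanCLM (𝕜 := ℂ) X : V →L[ℂ] V) : V →ₗ[ℂ] V)
  have ψ_apply : ∀ X v, ψ X v = toEuclideanCLM (𝕜 := ℂ) X v := fun _ _ => rfl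
  -- the averaging projection
  set Q : Mat n := (M : ℂ)⁻¹ • ∑ k ∈ Finset.range M, C ^ k with hQdef
  have hMne : (M : ℂ) ≠ 0 := Nat.cast_ne_zero.mpr hM.ne'
  have hshift : ∑ k ∈ Finset.range M, C ^ (k + 1) = ∑ k ∈ Finset.range M, C ^ k := by
    have h1 := Finset.sum_range_succ (fun k => C ^ k) M
    have h2 := Finset.sum_range_succ' (fun k => C ^ k) M
    simp only [pow_zero] at h2
    rw [h1, hCM] at h2
    exact (add_right_cancel h2.symm)
  have hCQ : C * Q = Q := by
    rw [hQdef, mul_smul_comm, Finset.mul_sum]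
    congr 1
    calc ∑ k ∈ Finset.range M, C * C ^ k = ∑ k ∈ Finset.range M, C ^ (k + 1) := by
          refine Finset.sum_congr rfl fun k _ => ?_
          rw [pow_succ']
      _ = ∑ k ∈ Finset.range M, C ^ k := hshift
  have hCkQ : ∀ k, C ^ k * Q = Q := by
    intro k
    induction k with
    | zero => simp
    | succ k ih => rw [pow_succ, mul_assoc, hCQ, ih]
  have hQQ : Q * Q = Q := by
    have h5 : ∑ k ∈ Finset.range M, C ^ k * Q = (M : ℂ) • Q := by
      rw [Finset.sum_congr rfl fun k _ => hCkQ k, Finset.sum_const, Finset.card_range,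
        Nat.cast_smul_eq_nsmul]
    nth_rewrite 1 [hQdef]
    rw [smul_mul_assoc, Finset.sum_mul, h5, smul_smul, inv_mul_cancel₀ hMne, one_smul]
  have hQC : Q * C = Q := by
    have h6 : ∑ k ∈ Finset.range M, C ^ k * C = ∑ k ∈ Finset.range M, C ^ k := by
      rw [Finset.sum_congr rfl fun k _ => (pow_succ C k).symm]
      exact hshift
    nth_rewrite 1 [hQdef]
    rw [smul_mul_assoc, Finset.sum_mul, h6, ← hQdef]
  have hAQ : A * Q = Q * A := by
    rw [hQdef, mul_smul_comm, smul_mul_assoc, Finset.mul_sum, Finset.sum_mul]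
    congr 1
    refine Finset.sum_congr rfl fun k _ => ?_
    exact (Commute.pow_right hcomm k).eq
  have ψ_mul : ∀ X Y (v : V), ψ (X * Y) v = ψ X (ψ Y v) := by
    intro X Y v
    rw [ψ_apply, ψ_apply, ψ_apply, phi_mul_apply]
  have ψ_smul : ∀ (r : ℂ) (X : Mat n) (v : V), ψ (r • X) v = r • ψ X v := by
    intro r X v
    rw [ψ_apply, ψ_apply, _root_.map_smul, ContinuousLinearMap.smul_apply]
  have ψ_inj : Function.Injective ψ := by
    intro X Y h
    apply (toEuclideanCLM (𝕜 := ℂ) (n := Fin n)).injective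
    exact ContinuousLinearMap.coe_injective h
  set U : Submodule ℂ V := LinearMap.ker (ψ Q) with hUdef
  have hCU : ∀ v ∈ U, ψ C v ∈ U := by
    intro v hv
    rw [hUdef, LinearMap.mem_ker] at hv ⊢
    rw [← ψ_mul, hQC]
    exact hv
  have hAU : ∀ v ∈ U, ψ A v ∈ U := by
    intro v hv
    rw [hUdef, LinearMap.mem_ker] at hv ⊢
    rw [← ψ_mul, ← hAQ, ψ_mul, hv, map_zero]
  have hUbot : U ≠ ⊥ := by
    intro hbot
    have hinj : Function.Injective (ψ Q) := by
      rw [← LinearMap.ker_eq_bot]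
      exact hbot
    have hfix : ∀ v : V, ψ Q v = v := by
      intro v
      exact hinj (by rw [← ψ_mul, hQQ])
    apply hC
    apply ψ_inj
    apply LinearMap.ext
    intro v
    have h1 : ψ (C * Q) v = ψ C v := by rw [ψ_mul, hfix]
    rw [hCQ, hfix] at h1
    rw [← h1, ψ_apply, phi_one_apply]
  haveI : Nontrivial U := Submodule.nontrivial_iff_ne_bot.mpr hUbot
  obtain ⟨lam, hlam⟩ := Module.End.exists_eigenvalue ((ψ C).restrict hCU)
  obtain ⟨w, hw⟩ := hlam.exists_hasEigenvector
  have hgw : (ψ C).restrict hCU w = lam • w := Module.End.mem_eigenspace_iff.mp hw.1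
  set v₀ : V := (w : V) with hv₀def
  have hv₀ : v₀ ≠ 0 := fun h => hw.2 (Subtype.ext h)
  have hCv₀ : ψ C v₀ = lam • v₀ := by
    have h := congrArg (Subtype.val) hgw
    rw [LinearMap.restrict_coe_apply] at h
    exact h.trans (Submodule.coe_smul lam w)
  have hpow : ∀ k : ℕ, ψ (C ^ k) v₀ = lam ^ k • v₀ := by
    intro k
    rw [ψ_apply]
    exact phi_pow_apply C lam v₀ (by rw [← ψ_apply]; exact hCv₀) k
  have hlamne : lam ≠ 1 := by
    intro h1
    have hQv : ψ Q v₀ = v₀ := by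
      rw [hQdef, ψ_smul, ψ_apply, _root_.map_sum, ContinuousLinearMap.sum_apply]
      have : ∀ k ∈ Finset.range M, toEuclideanCLM (𝕜 := ℂ) (C ^ k) v₀ = v₀ := by
        intro k _
        rw [← ψ_apply, hpow k, h1, one_pow, one_smul]
      rw [Finset.sum_congr rfl this, Finset.sum_const, Finset.card_range,
        ← Nat.cast_smul_eq_nsmul ℂ, smul_smul, inv_mul_cancel₀ hMne, one_smul]
    have h0 : ψ Q v₀ = 0 := LinearMap.mem_ker.mp w.2
    exact hv₀ (by rw [← hQv, h0])
  have hlamM : lam ^ M = 1 := by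
    have h1 : ψ (C ^ M) v₀ = lam ^ M • v₀ := hpow M
    rw [hCM, ψ_apply, phi_one_apply] at h1
    have h2 : (lam ^ M - 1) • v₀ = 0 := by rw [sub_smul, one_smul, ← h1, sub_self]
    rcases smul_eq_zero.mp h2 with h | h
    · exact sub_eq_zero.mp h
    · exact absurd h hv₀
  set E : Submodule ℂ V := Module.End.eigenspace (ψ C) lam with hEdef
  have hv₀E : v₀ ∈ E := Module.End.mem_eigenspace_iff.mpr hCv₀
  have hAE : ∀ x ∈ E, ψ A x ∈ E := by
    intro x hx
    rw [hEdef, Module.End.mem_eigenspace_iff] at hx ⊢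
    rw [← ψ_mul, ← hcomm, ψ_mul, hx, _root_.map_smul]
  haveI : Nontrivial E :=
    ⟨⟨⟨v₀, hv₀E⟩, 0, fun h => hv₀ (by simpa using congrArg Subtype.val h)⟩⟩
  obtain ⟨μ, hmu⟩ := Module.End.exists_eigenvalue ((ψ A).restrict hAE)
  obtain ⟨u, hu⟩ := hmu.exists_hasEigenvector
  have hgu : (ψ A).restrict hAE u = μ • u := Module.End.mem_eigenspace_iff.mp hu.1
  refine ⟨(u : V), μ, lam, ?_, hlamne, hlamM, ?_, ?_⟩
  · exact fun h => hu.2 (Subtype.ext h)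
  · have h := congrArg (Subtype.val) hgu
    rw [LinearMap.restrict_coe_apply] at h
    exact h.trans (Submodule.coe_smul μ u)
  · exact Module.End.mem_eigenspace_iff.mp u.2



lemma eq_one_of_smul_eq (z : ℂ) {W : Type*} [AddCommGroup W] [Module ℂ W] (v : W)
    (hv : v ≠ 0) (h : z • v = v) : z = 1 := by
  have h2 : (z - 1) • v = 0 := by rw [sub_smul, one_smul, h, sub_self]
  rcases smul_eq_zero.mp h2 with h3 | h3
  · exact sub_eq_zero.mp h3
  · exact absurd h3 hv

lemma re_pos_of_close (z : ℂ) (hz : ‖z‖ = 1) (h : ‖z - 1‖ < 1/2) : 0 < z.re := by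
  have h1 : ‖z - 1‖ ^ 2 = Complex.normSq (z - 1) := Complex.sq_norm (z - 1)
  have h2 : ‖z‖ ^ 2 = Complex.normSq z := Complex.sq_norm z
  rw [hz] at h2
  rw [Complex.normSq_apply] at h1 h2
  simp only [Complex.sub_re, Complex.sub_im, Complex.one_re, Complex.one_im, sub_zero] at h1
  nlinarith [norm_nonneg (z - 1), h]

lemma small_commute {K : Subgroup (GL (Fin n) ℂ)} [Finite K]
    (hK : ∀ x : K, mval x ∈ unitary (Mat n))
    (a b : K) (ha0 : ‖mval a - 1‖ < 1/2) (hb0 : ‖mval b - 1‖ < 1/2) : a * b = b * a := by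
  by_contra hab0
  set T : Set (K × K) :=
    {p | ‖mval p.1 - 1‖ < 1/2 ∧ ‖mval p.2 - 1‖ < 1/2 ∧ p.1 * p.2 ≠ p.2 * p.1} with hTdef
  have hTne : T.Nonempty := ⟨(a, b), ha0, hb0, hab0⟩
  obtain ⟨⟨a', b'⟩, hmemT, hmin⟩ :=
    Set.exists_min_image T (fun p => ‖mval p.2 - 1‖) (Set.toFinite T) hTne
  obtain ⟨ha, hb, hab⟩ := hmemT
  simp only at ha hb hab hmin
  set c := a' * b' * a'⁻¹ * b'⁻¹ with hcdef
  have hc1 : c ≠ 1 := by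
    intro h
    apply hab
    have h3 : a' * b' * a'⁻¹ * b'⁻¹ * (b' * a') = 1 * (b' * a') := by rw [← hcdef, h]
    rw [show a' * b' * a'⁻¹ * b'⁻¹ * (b' * a') = a' * b' by group, one_mul] at h3
    exact h3
  have hbne : (0 : ℝ) < ‖mval b' - 1‖ := by
    rcases (norm_nonneg (mval b' - 1)).eq_or_lt with h | h
    · exfalso
      have h1 : mval b' = 1 := by
        have := (norm_eq_zero.mp h.symm)
        rwa [sub_eq_zero] at this
      have h2 : b' = 1 := mval_injective (by rw [h1, mval_one])
      exact hab (by rw [h2, mul_one, one_mul])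
    · exact h
  have hcnorm : ‖mval c - 1‖ < ‖mval b' - 1‖ := by
    calc ‖mval c - 1‖ ≤ 2 * ‖mval a' - 1‖ * ‖mval b' - 1‖ := comm_norm hK a' b'
      _ < ‖mval b' - 1‖ := by nlinarith
  have hcsmall : ‖mval c - 1‖ < 1/2 := lt_trans hcnorm hb
  have hac : a' * c = c * a' := by
    by_contra h
    exact absurd (hmin (a', c) ⟨ha, hcsmall, h⟩) (not_le.mpr hcnorm)
  have hbc : Commute b' c := by
    by_contra h
    exact absurd (hmin (b', c) ⟨hb, hcsmall, h⟩) (not_le.mpr hcnorm)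
  have hkey : b' * a' * b'⁻¹ = c⁻¹ * a' := by rw [hcdef]; group
  have hconj : ∀ k : ℕ, b' ^ k * a' * (b'⁻¹) ^ k = (c⁻¹) ^ k * a' := by
    intro k
    induction k with
    | zero => simp
    | succ k ih =>
        have hbcik : b' * (c⁻¹) ^ k = (c⁻¹) ^ k * b' := ((hbc.inv_right).pow_right k).eq
        calc b' ^ (k+1) * a' * (b'⁻¹) ^ (k+1)
            = b' * (b' ^ k * a' * (b'⁻¹) ^ k) * b'⁻¹ := by
              rw [pow_succ' b' k, pow_succ (b'⁻¹) k]
              simp only [mul_assoc]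
          _ = b' * ((c⁻¹) ^ k * a') * b'⁻¹ := by rw [ih]
          _ = (c⁻¹) ^ k * (b' * a' * b'⁻¹) := by
              rw [← mul_assoc, ← mul_assoc, hbcik]
              simp only [mul_assoc]
          _ = (c⁻¹) ^ k * (c⁻¹ * a') := by rw [hkey]
          _ = (c⁻¹) ^ (k+1) * a' := by rw [pow_succ]; simp only [mul_assoc]
  have hnormk : ∀ k : ℕ, ‖mval ((c⁻¹) ^ k * a') - 1‖ < 1/2 := by
    intro k
    have h1 : (c⁻¹) ^ k * a' = b' ^ k * a' * (b' ^ k)⁻¹ := by rw [← hconj k, inv_pow]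
    rw [h1, norm_conj hK (b' ^ k) a']
    exact ha
  have hMpos : 0 < orderOf c := orderOf_pos c
  have hCM : (mval c) ^ (orderOf c) = 1 := by rw [← mval_pow, pow_orderOf_eq_one, mval_one]
  have hACCA : mval a' * mval c = mval c * mval a' := by rw [← mval_mul, ← mval_mul, hac]
  have hCne : mval c ≠ 1 := fun h => hc1 (mval_injective (by rw [h, mval_one]))
  obtain ⟨v, μ, lam, hv, hlamne, hlamM, hAv, hCv⟩ :=
    exists_common_eigvec (mval a') (mval c) hACCA (orderOf c) hMpos hCM hCne
  have hlam0 : lam ≠ 0 := by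
    intro h
    rw [h, zero_pow hMpos.ne'] at hlamM
    exact zero_ne_one hlamM
  have hCiv : toEuclideanCLM (𝕜 := ℂ) (mval c⁻¹) v = lam⁻¹ • v := by
    have h1 : toEuclideanCLM (𝕜 := ℂ) (mval c⁻¹) (toEuclideanCLM (𝕜 := ℂ) (mval c) v) = v := by
      rw [← phi_mul_apply, mval_inv_mul, phi_one_apply]
    rw [hCv, _root_.map_smul] at h1
    have h2 : lam⁻¹ • (lam • toEuclideanCLM (𝕜 := ℂ) (mval c⁻¹) v) = lam⁻¹ • v := by rw [h1]
    rwa [smul_smul, inv_mul_cancel₀ hlam0, one_smul] at h2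
  have hzk : ∀ k : ℕ, toEuclideanCLM (𝕜 := ℂ) (mval ((c⁻¹) ^ k * a')) v
      = (μ * (lam⁻¹) ^ k) • v := by
    intro k
    rw [mval_mul, mval_pow, phi_mul_apply, hAv, _root_.map_smul,
      phi_pow_apply (mval c⁻¹) lam⁻¹ v hCiv k, smul_smul, mul_comm]
  have hmuabs : ‖μ‖ = 1 := by
    have h1 : toEuclideanCLM (𝕜 := ℂ) ((mval a') ^ (orderOf a')) v = μ ^ (orderOf a') • v :=
      phi_pow_apply _ _ _ hAv _
    rw [← mval_pow, pow_orderOf_eq_one, mval_one, phi_one_apply] at h1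
    exact Complex.norm_eq_one_of_pow_eq_one (eq_one_of_smul_eq _ v hv h1.symm) (orderOf_pos a').ne'
  have hlamabs : ‖lam‖ = 1 := Complex.norm_eq_one_of_pow_eq_one hlamM hMpos.ne'
  have habs : ∀ k : ℕ, ‖μ * (lam⁻¹) ^ k‖ = 1 := by
    intro k
    rw [norm_mul, norm_pow, norm_inv, hlamabs, hmuabs, inv_one, one_pow, mul_one]
  have hre : ∀ k : ℕ, 0 < (μ * (lam⁻¹) ^ k).re := by
    intro k
    apply re_pos_of_close _ (habs k)
    exact lt_of_le_of_lt (eigen_norm_le _ v hv _ (hzk k)) (hnormk k)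
  have hsum : ∑ k ∈ Finset.range (orderOf c), (μ * (lam⁻¹) ^ k) = 0 := by
    rw [← Finset.mul_sum]
    have hlaminv : lam⁻¹ ≠ 1 := fun h => hlamne (by rw [← inv_inv lam, h, inv_one])
    rw [geom_sum_eq hlaminv, inv_pow, hlamM, inv_one, sub_self, zero_div, mul_zero]
  have hcontr : (0 : ℝ) < 0 := by
    have h1 : 0 < (∑ k ∈ Finset.range (orderOf c), (μ * (lam⁻¹) ^ k)).re := by
      rw [Complex.re_sum]
      exact Finset.sum_pos (fun k _ => hre k) (Finset.nonempty_range_iff.mpr hMpos.ne')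
    rw [hsum] at h1
    simpa using h1
  exact absurd hcontr (lt_irrefl 0)

end Eigen

lemma packing (n : ℕ) : ∃ N : ℕ, ∀ s : Finset (Mat n), (∀ x ∈ s, ‖x‖ ≤ 1) →
    (∀ x ∈ s, ∀ y ∈ s, x ≠ y → 1/2 ≤ dist x y) → s.card ≤ N := by
  classical
  have hcomp : IsCompact (Metric.closedBall (0 : Mat n) 1) := isCompact_closedBall 0 1
  obtain ⟨t, htfin, hcov⟩ :=
    (Metric.totallyBounded_iff.mp hcomp.totallyBounded) (1/4) (by norm_num)
  refine ⟨htfin.toFinset.card, ?_⟩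
  intro s hb hsep
  have hchoice : ∀ x : Mat n, ∃ y : Mat n,
      x ∈ Metric.closedBall (0 : Mat n) 1 → (y ∈ htfin.toFinset ∧ x ∈ Metric.ball y (1/4)) := by
    intro x
    by_cases hx : x ∈ Metric.closedBall (0 : Mat n) 1
    · have h1 := hcov hx
      simp only [Set.mem_iUnion, exists_prop] at h1
      obtain ⟨y, hy1, hy2⟩ := h1
      exact ⟨y, fun _ => ⟨htfin.mem_toFinset.mpr hy1, hy2⟩⟩
    · exact ⟨0, fun h => absurd h hx⟩
  choose f hf using hchoice
  by_contra hcard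
  push_neg at hcard
  have hmem : ∀ x ∈ s, x ∈ Metric.closedBall (0 : Mat n) 1 := by
    intro x hx
    rw [Metric.mem_closedBall, dist_zero_right]
    exact hb x hx
  obtain ⟨x, hx, y, hy, hxy, hfeq⟩ :=
    Finset.exists_ne_map_eq_of_card_lt_of_maps_to hcard (fun x hx => (hf x (hmem x hx)).1)
  have h1 := (hf x (hmem x hx)).2
  have h2 := (hf y (hmem y hy)).2
  rw [Metric.mem_ball] at h1 h2
  have h3 : dist x y < 1/2 := by
    calc dist x y ≤ dist x (f x) + dist y (f x) := dist_triangle_right x y (f x)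
      _ = dist x (f x) + dist y (f y) := by rw [hfeq]
      _ < 1/4 + 1/4 := by exact add_lt_add h1 h2
      _ = 1/2 := by norm_num
  exact absurd (hsep x hx y hy hxy) (not_le.mpr h3)

lemma key (hn : 0 < n) (N : ℕ)
    (hN : ∀ s : Finset (Mat n), (∀ x ∈ s, ‖x‖ ≤ 1) →
      (∀ x ∈ s, ∀ y ∈ s, x ≠ y → 1/2 ≤ dist x y) → s.card ≤ N)
    (K : Subgroup (GL (Fin n) ℂ)) [Finite K]
    (hK : ∀ x : K, mval x ∈ unitary (Mat n)) :
    ∃ A : Subgroup K, A.Normal ∧ (∀ x y : A, x * y = y * x) ∧ A.index ≤ N := by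
  classical
  haveI : Nontrivial (Mat n) := by
    refine ⟨0, 1, fun h => ?_⟩
    have h2 := congrFun (congrFun h ⟨0, hn⟩) ⟨0, hn⟩
    simp [Matrix.one_apply] at h2
  set S : Set K := {x | ‖mval x - 1‖ < 1/2} with hSdef
  set A : Subgroup K := Subgroup.closure S with hAdef
  have hcomm : ∀ x ∈ A, ∀ y ∈ A, x * y = y * x := by
    have h1 : A ≤ Subgroup.centralizer S := by
      rw [hAdef, Subgroup.closure_le]
      intro x hx
      simp only [SetLike.mem_coe, Subgroup.mem_centralizer_iff]
      intro y hy
      exact small_commute hK y x hy hx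
    have h2 : A ≤ Subgroup.centralizer A := by
      rw [hAdef, Subgroup.closure_le]
      intro x hx
      simp only [SetLike.mem_coe, Subgroup.mem_centralizer_iff]
      intro y hy
      exact (h1 hy x hx).symm
    intro x hx y hy
    exact (h2 hy) x hx
  have hcommSub : ∀ x y : A, x * y = y * x := fun x y =>
    Subtype.ext (hcomm x.1 x.2 y.1 y.2)
  have hnormal : A.Normal := by
    constructor
    intro x hx g
    rw [hAdef] at hx ⊢
    induction hx using Subgroup.closure_induction with
    | mem y hy =>
        apply Subgroup.subset_closure
        rw [hSdef, Set.mem_setOf_eq] at hy ⊢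
        rw [norm_conj hK g y]
        exact hy
    | one => simpa using Subgroup.one_mem _
    | mul y z _ _ hy hz =>
        have h3 := Subgroup.mul_mem _ hy hz
        simpa [mul_assoc] using h3
    | inv y _ hy =>
        have h3 := Subgroup.inv_mem _ hy
        simpa [mul_assoc] using h3
  refine ⟨A, hnormal, hcommSub, ?_⟩
  haveI : Fintype (K ⧸ A) := Fintype.ofFinite _
  set rep : K ⧸ A → Mat n := fun q => mval (Quotient.out q) with hrepdef
  have hrep_d : ∀ q q' : K ⧸ A, dist (rep q) (rep q') < 1/2 → q = q' := by
    intro q q' hd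
    have h1 : mval ((Quotient.out q)⁻¹ * Quotient.out q') - 1
        = mval (Quotient.out q)⁻¹ * (mval (Quotient.out q') - mval (Quotient.out q)) := by
      rw [mul_sub, ← mval_mul, mval_inv_mul]
    have h3 : ‖mval (Quotient.out q') - mval (Quotient.out q)‖ < 1/2 := by
      rw [← norm_sub_rev, ← dist_eq_norm]
      exact hd
    have h2 : ‖mval ((Quotient.out q)⁻¹ * Quotient.out q') - 1‖ < 1/2 := by
      rw [h1, CStarRing.norm_mem_unitary_mul _ (hK (Quotient.out q)⁻¹)]
      exact h3
    have h4 : (Quotient.out q)⁻¹ * Quotient.out q' ∈ A := Subgroup.subset_closure h2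
    have h5 : ((Quotient.out q : K) : K ⧸ A) = ((Quotient.out q' : K) : K ⧸ A) :=
      QuotientGroup.eq.mpr h4
    rwa [QuotientGroup.out_eq', QuotientGroup.out_eq'] at h5
  have hinj : Function.Injective rep := by
    intro q q' h
    exact hrep_d q q' (by rw [h, dist_self]; norm_num)
  have hcard : Nat.card (K ⧸ A) ≤ N := by
    set s : Finset (Mat n) := Finset.image rep Finset.univ with hsdef
    have hb : ∀ x ∈ s, ‖x‖ ≤ 1 := by
      intro x hx
      obtain ⟨q, _, rfl⟩ := Finset.mem_image.mp hx
      exact le_of_eq (CStarRing.norm_of_mem_unitary (hK _))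
    have hsep : ∀ x ∈ s, ∀ y ∈ s, x ≠ y → 1/2 ≤ dist x y := by
      intro x hx y hy hxy
      obtain ⟨q, _, rfl⟩ := Finset.mem_image.mp hx
      obtain ⟨q', _, rfl⟩ := Finset.mem_image.mp hy
      by_contra hlt
      push_neg at hlt
      exact hxy (by rw [hrep_d q q' hlt])
    have h6 := hN s hb hsep
    rw [hsdef, Finset.card_image_of_injective _ hinj, Finset.card_univ] at h6
    rw [Nat.card_eq_fintype_card]
    exact h6
  exact hcard




open scoped MatrixOrder in
/-- Weyl's unitarian trick: every finite subgroup of `GL n ℂ` is conjugate to a subgroup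
consisting of unitary matrices. -/
lemma unitarize (H : Subgroup (GL (Fin n) ℂ)) [Finite H] :
    ∃ (K : Subgroup (GL (Fin n) ℂ)) (_ : H ≃* K), ∀ x : K, mval x ∈ unitary (Mat n) := by
  classical
  haveI : Fintype H := Fintype.ofFinite _
  set P : Mat n := ∑ x : H, (mval x)ᴴ * mval x with hPdef
  have hP1 : ((mval (1 : H))ᴴ * mval (1 : H) : Mat n) = 1 := by
    rw [mval_one, conjTranspose_one, one_mul]
  have hPD : P.PosDef := by
    have hsplit : P = (mval (1 : H))ᴴ * mval (1 : H)
        + ∑ x ∈ Finset.univ.erase (1 : H), (mval x)ᴴ * mval x := by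
      rw [hPdef, ← Finset.add_sum_erase _ _ (Finset.mem_univ (1 : H))]
    have hrest : (∑ x ∈ Finset.univ.erase (1 : H), (mval x)ᴴ * mval x).PosSemidef := by
      apply Finset.sum_induction _ _ (fun a b ha hb => ha.add hb) Matrix.PosSemidef.zero
      intro x _
      exact posSemidef_conjTranspose_mul_self (mval x)
    rw [hsplit, hP1]
    exact Matrix.PosDef.one.add_posSemidef hrest
  have hinvar : ∀ x : H, (mval x)ᴴ * P * mval x = P := by
    intro x
    rw [hPdef, Finset.mul_sum, Finset.sum_mul]
    refine Fintype.sum_equiv (Equiv.mulRight x) _ _ fun g => ?_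
    rw [show ((Equiv.mulRight x) g : H) = g * x from rfl, mval_mul, conjTranspose_mul]
    noncomm_ring
  set T : Mat n := CFC.sqrt P with hTdef
  have hT2 : T * T = P := CFC.sqrt_mul_sqrt_self P (Matrix.nonneg_iff_posSemidef.mpr hPD.posSemidef)
  have hTH : Tᴴ = T := (Matrix.nonneg_iff_posSemidef.mp (CFC.sqrt_nonneg P)).isHermitian
  have hdetP : P.det ≠ 0 := hPD.det_pos.ne'
  have hdetT : IsUnit T.det := by
    rw [isUnit_iff_ne_zero]
    intro h
    apply hdetP
    rw [← hT2, det_mul, h, mul_zero]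
  have hTunit : IsUnit T := (Matrix.isUnit_iff_isUnit_det T).mpr hdetT
  set Tu : GL (Fin n) ℂ := hTunit.unit with hTudef
  have hTuval : (Tu : Mat n) = T := rfl
  have hTi : ((Tu⁻¹ : GL (Fin n) ℂ) : Mat n) = T⁻¹ := by
    rw [Matrix.coe_units_inv, hTuval]
  have hTiH : (T⁻¹)ᴴ = T⁻¹ := by rw [conjTranspose_nonsing_inv, hTH]
  have hTiT : T⁻¹ * T = 1 := Matrix.nonsing_inv_mul T hdetT
  have hTTi : T * T⁻¹ = 1 := Matrix.mul_nonsing_inv T hdetT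
  refine ⟨Subgroup.map (MulAut.conj Tu).toMonoidHom H, (MulAut.conj Tu).subgroupMap H, ?_⟩
  intro z
  obtain ⟨x, hx, hxz⟩ := z.2
  have hval : mval z = T * (x : Mat n) * T⁻¹ := by
    have h1 : (z : GL (Fin n) ℂ) = Tu * x * Tu⁻¹ := by
      rw [← hxz]
      rfl
    show ((z : GL (Fin n) ℂ) : Mat n) = T * (x : Mat n) * T⁻¹
    rw [h1, Units.val_mul, Units.val_mul, hTuval, hTi]
  have hxH : (mval (⟨x, hx⟩ : H)) = (x : Mat n) := rfl
  have hinv' : ((x : Mat n))ᴴ * P * (x : Mat n) = P := by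
    rw [← hxH]
    exact hinvar ⟨x, hx⟩
  have hstar : star (mval z) = T⁻¹ * ((x : Mat n))ᴴ * T := by
    rw [hval, Matrix.star_eq_conjTranspose, conjTranspose_mul, conjTranspose_mul, hTiH, hTH]
    noncomm_ring
  have hmain : star (mval z) * mval z = 1 := by
    rw [hstar, hval]
    calc T⁻¹ * (x : Mat n)ᴴ * T * (T * (x : Mat n) * T⁻¹)
        = T⁻¹ * ((x : Mat n)ᴴ * (T * T) * (x : Mat n)) * T⁻¹ := by noncomm_ring
      _ = T⁻¹ * P * T⁻¹ := by rw [hT2, hinv']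
      _ = 1 := by
          rw [← hT2, show T⁻¹ * (T * T) * T⁻¹ = (T⁻¹ * T) * (T * T⁻¹) by noncomm_ring,
            hTiT, hTTi, one_mul]
  rw [Unitary.mem_iff]
  exact ⟨hmain, mul_eq_one_comm.mp hmain⟩

lemma jordan_n (n : ℕ) : ∃ J : ℕ, 0 < J ∧ IsJordanWith J (GL (Fin n) ℂ) := by
  rcases Nat.eq_zero_or_pos n with hn | hn
  · subst hn
    refine ⟨1, one_pos, ?_⟩
    intro H _
    haveI : Subsingleton (Mat 0) := ⟨fun a b => by ext i j; exact i.elim0⟩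
    haveI : Subsingleton (GL (Fin 0) ℂ) := ⟨fun a b => Units.ext (Subsingleton.elim _ _)⟩
    refine ⟨⊤, inferInstance, ?_, ?_⟩
    · intro a b
      exact Subtype.ext (Subtype.ext (Subsingleton.elim _ _))
    · rw [Subgroup.index_top]
  · obtain ⟨N, hN⟩ := packing n
    refine ⟨N + 1, Nat.succ_pos N, ?_⟩
    intro H hHfin
    haveI : Finite ↥H := hHfin
    obtain ⟨K, e, hK⟩ := unitarize H
    haveI : Finite ↥K := Finite.of_equiv _ e.toEquiv
    have hN' : ∀ s : Finset (Mat n), (∀ x ∈ s, ‖x‖ ≤ 1) →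
        (∀ x ∈ s, ∀ y ∈ s, x ≠ y → 1/2 ≤ dist x y) → s.card ≤ N + 1 :=
      fun s h1 h2 => le_trans (hN s h1 h2) (Nat.le_succ N)
    obtain ⟨A, hnorm, hcomm, hidx⟩ := key hn (N + 1) hN' K hK
    refine ⟨A.comap e.toMonoidHom, hnorm.comap e.toMonoidHom, ?_, ?_⟩
    · intro a b
      apply Subtype.ext
      have ha : e a.1 ∈ A := a.2
      have hb : e b.1 ∈ A := b.2
      have h1 : (⟨e a.1, ha⟩ : A) * ⟨e b.1, hb⟩ = ⟨e b.1, hb⟩ * ⟨e a.1, ha⟩ := hcomm _ _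
      have h2 : e a.1 * e b.1 = e b.1 * e a.1 := congrArg Subtype.val h1
      rw [← _root_.map_mul, ← _root_.map_mul] at h2
      exact e.injective h2
    · rw [Subgroup.index_comap_of_surjective A e.surjective]
      exact hidx

end JordanAux

open Matrix in
/-- Jordan's theorem: for every `n` there is a constant `J n` such that every finite
subgroup of `GL(n, ℂ)` contains a normal abelian subgroup of index at most `J n`;
in particular `GL(n, ℂ)` is a Jordan group. -/
theorem jordan_GL_complex :
    ∃ J : ℕ → ℕ, ∀ n : ℕ, 0 < J n ∧ IsJordanWith (J n) (GL (Fin n) ℂ) := by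
  choose J hJ using JordanAux.jordan_n
  exact ⟨J, hJ⟩
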